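/- Let D ⊆ ℝ^n be a domain, f : D → ℝ^n continuous, open, and closed onto its image, K ⊆ f(D) a compact set, and b ∈ ∂D. Then there exists ε₁ > 0 such that for all r ∈ (0, ε₁), K ⊆ f(D) \ closure(f(B(b,r) ∩ D)). -/

import Mathlib

open Filter Topology Metric Set

private lemma exists_ne_of_isOpen {E : Type*} [AddCommGroup E] [TopologicalSpace E]
    [ContinuousAdd E] [Nontrivial E] [Module ℝ E] [ContinuousSMul ℝ E] [T1Space E]
    {U : Set E} (hU : IsOpen U) (hne : U.Nonempty) (y : E) : ∃ w ∈ U, w ≠ y := by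
  obtain ⟨u, hu⟩ := hne
  by_cases h : u = y
  · subst h
    have hmem : U ∩ {x | x ≠ u} ∈ 𝓝[≠] u :=
      inter_mem (nhdsWithin_le_nhds (hU.mem_nhds hu)) self_mem_nhdsWithin
    obtain ⟨w, hwU, hw⟩ := Filter.nonempty_of_mem hmem
    exact ⟨w, hwU, hw⟩
  · exact ⟨u, hu, h⟩

private lemma claimA (n : ℕ) (D : Set (EuclideanSpace ℝ (Fin n)))
    (hD : IsOpen D) (hDc : IsConnected D)
    (f : EuclideanSpace ℝ (Fin n) → EuclideanSpace ℝ (Fin n))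
    (hf : ContinuousOn f D)
    (hopen : ∀ U ⊆ D, IsOpen U → IsOpen (f '' U))
    (hclosed : ∀ C ⊆ D, closure C ∩ D = C → closure (f '' C) ∩ f '' D = f '' C)
    (K : Set (EuclideanSpace ℝ (Fin n))) (hK : IsCompact K) (hKD : K ⊆ f '' D)
    (b : EuclideanSpace ℝ (Fin n)) (hb : b ∈ frontier D) :
    ∃ ε₁ > (0 : ℝ), ∀ x ∈ Metric.ball b ε₁ ∩ D, f x ∉ K := by
  have hbD : b ∉ D := by
    rw [hD.frontier_eq] at hb
    exact hb.2
  rcases subsingleton_or_nontrivial (EuclideanSpace ℝ (Fin n)) with hsub | hnt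
  · -- subsingleton case: D nonempty implies D = univ, frontier empty
    exfalso
    obtain ⟨d, hd⟩ := hDc.nonempty
    exact hbD (by rwa [Subsingleton.elim b d])
  by_contra hcon
  push_neg at hcon
  -- build a sequence x m ∈ ball b (1/(m+1)) ∩ D with f (x m) ∈ K
  have hx : ∀ m : ℕ, ∃ x, x ∈ Metric.ball b (1 / (m + 1)) ∩ D ∧ f x ∈ K := by
    intro m
    have hpos : (0 : ℝ) < 1 / (m + 1) := by positivity
    obtain ⟨x, hx1, hx2⟩ := hcon (1 / (m + 1)) hpos
    exact ⟨x, hx1, hx2⟩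
  choose x hxmem hxK using hx
  have hxb : Tendsto x atTop (𝓝 b) := by
    rw [tendsto_iff_dist_tendsto_zero]
    refine squeeze_zero (fun m => dist_nonneg) (fun m => le_of_lt ?_)
      tendsto_one_div_add_atTop_nhds_zero_nat
    exact (hxmem m).1
  obtain ⟨y, hyK, φ, hφ, hfu⟩ := hK.tendsto_subseq (fun m => hxK m)
  set u : ℕ → EuclideanSpace ℝ (Fin n) := x ∘ φ with hu_def
  have huD : ∀ m, u m ∈ D := fun m => (hxmem (φ m)).2
  have hub : Tendsto u atTop (𝓝 b) := hxb.comp hφ.tendsto_atTop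
  have hyfD : y ∈ f '' D := hKD hyK
  -- perturb to get values ≠ y
  have hv : ∀ m : ℕ, ∃ v, v ∈ D ∧ dist v (u m) < 1 / (m + 1) ∧ f v ≠ y ∧
      dist (f v) (f (u m)) < 1 / (m + 1) := by
    intro m
    have hpos : (0 : ℝ) < 1 / (m + 1) := by positivity
    obtain ⟨δ, hδpos, hδ⟩ := Metric.isOpen_iff.1 hD (u m) (huD m)
    have hcw : ContinuousWithinAt f D (u m) := hf (u m) (huD m)
    rw [Metric.continuousWithinAt_iff] at hcw
    obtain ⟨δ', hδ'pos, hδ'⟩ := hcw (1 / (m + 1)) hpos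
    set ρ := min δ (min δ' (1 / (m + 1))) with hρ_def
    have hρpos : 0 < ρ := lt_min hδpos (lt_min hδ'pos hpos)
    have hballD : Metric.ball (u m) ρ ⊆ D :=
      (Metric.ball_subset_ball (min_le_left _ _)).trans hδ
    have hopen' : IsOpen (f '' Metric.ball (u m) ρ) :=
      hopen _ hballD Metric.isOpen_ball
    have hne : (f '' Metric.ball (u m) ρ).Nonempty :=
      ⟨f (u m), mem_image_of_mem f (Metric.mem_ball_self hρpos)⟩
    obtain ⟨w, hwmem, hwy⟩ := exists_ne_of_isOpen hopen' hne y
    obtain ⟨v, hvball, hvw⟩ := hwmem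
    have hvD : v ∈ D := hballD hvball
    have hvdist : dist v (u m) < ρ := hvball
    refine ⟨v, hvD, lt_of_lt_of_le hvdist ((min_le_right _ _).trans (min_le_right _ _)), ?_, ?_⟩
    · rw [hvw]; exact hwy
    · exact hδ' hvD (lt_of_lt_of_le hvdist ((min_le_right _ _).trans (min_le_left _ _)))
  choose v hvD hvu hvy hfvu using hv
  have hone : Tendsto (fun m : ℕ => (1 : ℝ) / (m + 1)) atTop (𝓝 0) :=
    tendsto_one_div_add_atTop_nhds_zero_nat
  have hvb : Tendsto v atTop (𝓝 b) := by
    rw [tendsto_iff_dist_tendsto_zero]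
    have hub' : Tendsto (fun m => dist (u m) b) atTop (𝓝 0) :=
      tendsto_iff_dist_tendsto_zero.1 hub
    have hsum : Tendsto (fun m : ℕ => 1 / (m + 1) + dist (u m) b) atTop (𝓝 0) := by
      simpa using hone.add hub'
    exact squeeze_zero (fun m => dist_nonneg)
      (fun m => (dist_triangle (v m) (u m) b).trans
        (add_le_add (hvu m).le le_rfl)) hsum
  have hfvy : Tendsto (fun m => f (v m)) atTop (𝓝 y) := by
    rw [tendsto_iff_dist_tendsto_zero]
    have hfu' : Tendsto (fun m => dist (f (u m)) y) atTop (𝓝 0) :=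
      tendsto_iff_dist_tendsto_zero.1 hfu
    have hsum : Tendsto (fun m : ℕ => 1 / (m + 1) + dist (f (u m)) y) atTop (𝓝 0) := by
      simpa using hone.add hfu'
    exact squeeze_zero (fun m => dist_nonneg)
      (fun m => (dist_triangle (f (v m)) (f (u m)) y).trans
        (add_le_add (hfvu m).le le_rfl)) hsum
  -- S = range v is relatively closed in D
  set S := Set.range v with hS_def
  have hSD : S ⊆ D := range_subset_iff.2 hvD
  have hScl : closure S ∩ D = S := by
    apply subset_antisymm
    · intro z hz
      have hclosedins : IsClosed (insert b S) := hvb.isCompact_insert_range.isClosed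
      have : z ∈ insert b S := closure_minimal (subset_insert _ _) hclosedins hz.1
      rcases this with rfl | hzS
      · exact absurd hz.2 hbD
      · exact hzS
    · exact subset_inter subset_closure hSD
  have hkey := hclosed S hSD hScl
  have hyc : y ∈ closure (f '' S) :=
    mem_closure_of_tendsto hfvy
      (Filter.Eventually.of_forall fun m => mem_image_of_mem f (mem_range_self m))
  have : y ∈ f '' S := by rw [← hkey]; exact ⟨hyc, hyfD⟩
  obtain ⟨z, hzS, hzy⟩ := this
  obtain ⟨m, rfl⟩ := hzS
  exact hvy m hzy

/-- If `D ⊆ ℝⁿ` is a domain, `f` is continuous, open and closed onto its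
image on `D`, `K ⊆ f(D)` is compact and `b ∈ ∂D`, then there is `ε₁ > 0` with
`K ⊆ f(D) \ closure (f(B(b,r) ∩ D))` for all `r ∈ (0, ε₁)`. -/
theorem stmt6 (n : ℕ) (D : Set (EuclideanSpace ℝ (Fin n)))
    (hD : IsOpen D) (hDc : IsConnected D)
    (f : EuclideanSpace ℝ (Fin n) → EuclideanSpace ℝ (Fin n))
    (hf : ContinuousOn f D)
    (hopen : ∀ U ⊆ D, IsOpen U → IsOpen (f '' U))
    (hclosed : ∀ C ⊆ D, closure C ∩ D = C → closure (f '' C) ∩ f '' D = f '' C)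
    (K : Set (EuclideanSpace ℝ (Fin n))) (hK : IsCompact K) (hKD : K ⊆ f '' D)
    (b : EuclideanSpace ℝ (Fin n)) (hb : b ∈ frontier D) :
    ∃ ε₁ > (0 : ℝ), ∀ r ∈ Set.Ioo (0 : ℝ) ε₁,
      K ⊆ f '' D \ closure (f '' (Metric.ball b r ∩ D)) := by
  obtain ⟨ε₁, hε₁pos, hA⟩ := claimA n D hD hDc f hf hopen hclosed K hK hKD b hb
  refine ⟨ε₁, hε₁pos, fun r hr k hk => ⟨hKD hk, fun hkcl => ?_⟩⟩
  set C := closure (Metric.ball b r ∩ D) ∩ D with hC_def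
  have hCD : C ⊆ D := inter_subset_right
  have hCrel : closure C ∩ D = C := by
    apply subset_antisymm
    · intro z hz
      refine ⟨?_, hz.2⟩
      have : closure C ⊆ closure (Metric.ball b r ∩ D) := by
        calc closure C ⊆ closure (closure (Metric.ball b r ∩ D)) :=
              closure_mono inter_subset_left
          _ = closure (Metric.ball b r ∩ D) := closure_closure
      exact this hz.1
    · exact subset_inter subset_closure hCD
  have hkey := hclosed C hCD hCrel
  have hsub : f '' (Metric.ball b r ∩ D) ⊆ f '' C :=
    Set.image_mono (f := f) (fun z hz => ⟨subset_closure hz, hz.2⟩)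
  have hkC : k ∈ f '' C := by
    rw [← hkey]
    exact ⟨closure_mono hsub hkcl, hKD hk⟩
  obtain ⟨z, hzC, hzk⟩ := hkC
  have hzball : z ∈ Metric.ball b ε₁ := by
    have h1 : z ∈ closure (Metric.ball b r) :=
      closure_mono inter_subset_left hzC.1
    have h2 : dist z b ≤ r := by
      have := closure_ball_subset_closedBall h1
      exact this
    exact lt_of_le_of_lt h2 hr.2
  exact hA z ⟨hzball, hzC.2⟩ (hzk ▸ hk)
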